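/- arXiv:2311.17855 — 2 statements merged into one kernel-verified Lean document; each statement's English description precedes it below -/
import Mathlib

section
/- Let P, P̄ be transition kernels on S×A, r : S×A → ℝ, γ ∈ [0,1), φ₁,…,φ_d : S → ℝ, εM, εQ ≥ 0, and β > 0. Assume for every (x,a) ∈ S×A: (i) ∑_y |P(y|x,a) − P̄(y|x,a)| ≤ √2·εM + (2/β)·εQ; (ii) ∑_{i=1}^d |∑_y (P(y|x,a) − P̄(y|x,a))·φᵢ(y)| ≤ √d·(β·εM + 2·εQ). Set e₁ := (γ/(1−γ))·(√2·εM + (2/β)·εQ) and e₂ := (γ√d/(1−γ))·(β·εM + 2·εQ), and assume e₁ < 1. Let π* be an optimal deterministic policy for (r,P) and π̄* an optimal deterministic policy for (r,P̄). Then for every w ∈ ℝ^d: ‖V^{π*}(r,P) − V^{π̄*}(r,P)‖∞ ≤ (2e₁/(1−e₁))·‖V^{π*}(r,P) − ∑_{i=1}^d wᵢφᵢ‖∞ + (2e₂/(1−e₁))·‖w‖∞. -/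
open Finset Matrix

/-- Supremum norm of a vector indexed by a finite type. -/
noncomputable def supNorm {S : Type*} [Fintype S] (v : S → ℝ) : ℝ := ⨆ x, |v x|

/-- The row-stochastic matrix `P^μ` induced by a deterministic policy `μ`. -/
noncomputable def polMat {S A : Type*} (P : S → A → S → ℝ) (μ : S → A) : Matrix S S ℝ :=
  Matrix.of fun x y => P x (μ x) y

/-- The value function `V^μ(r,P) = (I - γ P^μ)⁻¹ r^μ` of a deterministic policy `μ`. -/
noncomputable def polVal {S A : Type*} [Fintype S] [DecidableEq S]
    (γ : ℝ) (r : S → A → ℝ) (P : S → A → S → ℝ) (μ : S → A) : S → ℝ :=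
  ((1 : Matrix S S ℝ) - γ • polMat P μ)⁻¹.mulVec (fun x => r x (μ x))

lemma abs_le_supNorm {S : Type*} [Fintype S] (v : S → ℝ) (x : S) : |v x| ≤ supNorm v :=
  le_ciSup (Set.Finite.bddAbove (Set.finite_range fun x => |v x|)) x

lemma supNorm_nonneg {S : Type*} [Fintype S] (v : S → ℝ) : 0 ≤ supNorm v :=
  Real.iSup_nonneg fun _ => abs_nonneg _

lemma mulVec_abs_le {S : Type*} [Fintype S] {Q : Matrix S S ℝ}
    (h0 : ∀ x y, 0 ≤ Q x y) (h1 : ∀ x, ∑ y, Q x y = 1) (v : S → ℝ) (x : S) :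
    |Q.mulVec v x| ≤ supNorm v := by
  have : Q.mulVec v x = ∑ y, Q x y * v y := rfl
  rw [this]
  calc |∑ y, Q x y * v y| ≤ ∑ y, |Q x y * v y| := Finset.abs_sum_le_sum_abs _ _
    _ = ∑ y, Q x y * |v y| := by
        refine Finset.sum_congr rfl fun y _ => ?_
        rw [abs_mul, abs_of_nonneg (h0 x y)]
    _ ≤ ∑ y, Q x y * supNorm v :=
        Finset.sum_le_sum fun y _ => mul_le_mul_of_nonneg_left (abs_le_supNorm v y) (h0 x y)
    _ = supNorm v := by rw [← Finset.sum_mul, h1, one_mul]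

lemma bellman {S A : Type*} [Fintype S] [Nonempty S] [DecidableEq S]
    (γ : ℝ) (hγ0 : 0 ≤ γ) (hγ1 : γ < 1) (r : S → A → ℝ) (P : S → A → S → ℝ)
    (h0 : ∀ x a y, 0 ≤ P x a y) (h1 : ∀ x a, ∑ y, P x a y = 1) (μ : S → A) :
    ∀ x, polVal γ r P μ x =
      r x (μ x) + γ * (polMat P μ).mulVec (polVal γ r P μ) x := by
  set M : Matrix S S ℝ := (1 : Matrix S S ℝ) - γ • polMat P μ with hM
  have hQ0 : ∀ x y, 0 ≤ polMat P μ x y := fun x y => h0 x (μ x) y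
  have hQ1 : ∀ x, ∑ y, polMat P μ x y = 1 := fun x => h1 x (μ x)
  have hdet : M.det ≠ 0 := by
    intro h
    obtain ⟨v, hv, hv0⟩ := (Matrix.exists_mulVec_eq_zero_iff).2 h
    have hfix : ∀ x, v x = γ * (polMat P μ).mulVec v x := by
      intro x
      have := congrFun hv0 x
      have hMx : M.mulVec v x = v x - γ * (polMat P μ).mulVec v x := by
        rw [hM, Matrix.sub_mulVec, Matrix.one_mulVec, Matrix.smul_mulVec]
        simp [Pi.sub_apply]
      rw [hMx, Pi.zero_apply] at this
      linarith [this]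
    have hle : supNorm v ≤ γ * supNorm v := by
      apply ciSup_le
      intro x
      rw [hfix x, abs_mul, abs_of_nonneg hγ0]
      exact mul_le_mul_of_nonneg_left (mulVec_abs_le hQ0 hQ1 v x) hγ0
    have hpos : 0 < supNorm v := by
      obtain ⟨x, hx⟩ := Function.ne_iff.1 hv
      exact lt_of_lt_of_le (abs_pos.2 hx) (abs_le_supNorm v x)
    nlinarith
  have hunit : IsUnit M.det := isUnit_iff_ne_zero.2 hdet
  have hMV : M.mulVec (polVal γ r P μ) = fun x => r x (μ x) := by
    have : polVal γ r P μ = M⁻¹.mulVec (fun x => r x (μ x)) := rfl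
    rw [this, Matrix.mulVec_mulVec, Matrix.mul_nonsing_inv M hunit, Matrix.one_mulVec]
  intro x
  have := congrFun hMV x
  have hMx : M.mulVec (polVal γ r P μ) x =
      polVal γ r P μ x - γ * (polMat P μ).mulVec (polVal γ r P μ) x := by
    rw [hM, Matrix.sub_mulVec, Matrix.one_mulVec, Matrix.smul_mulVec]
    simp [Pi.sub_apply]
  rw [hMx] at this
  linarith [this]

lemma dev_bound {S A : Type*} [Fintype S] [Nonempty S] {d : ℕ}
    (P Pbar : S → A → S → ℝ) (φ : Fin d → S → ℝ) (TVb Qb : ℝ)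
    (hTV : ∀ x a, ∑ y, |P x a y - Pbar x a y| ≤ TVb)
    (hQ : ∀ x a, ∑ i : Fin d, |∑ y, (P x a y - Pbar x a y) * φ i y| ≤ Qb)
    (μ : S → A) (v : S → ℝ) (w : Fin d → ℝ) (x : S) :
    |((polMat P μ - polMat Pbar μ).mulVec v) x| ≤
      TVb * supNorm (fun y => v y - ∑ i, w i * φ i y) + Qb * supNorm w := by
  set a := μ x with ha
  set D : S → ℝ := fun y => P x a y - Pbar x a y with hD
  set g : S → ℝ := fun y => v y - ∑ i, w i * φ i y with hg
  have h1 : ((polMat P μ - polMat Pbar μ).mulVec v) x = ∑ y, D y * v y := by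
    simp [Matrix.mulVec, dotProduct, polMat, Matrix.sub_apply, hD, ha]
  have hexp : ∑ y, D y * v y =
      (∑ y, D y * g y) + ∑ i, w i * ∑ y, D y * φ i y := by
    have step1 : ∑ y, D y * v y
        = ∑ y, (D y * g y + ∑ i, w i * (D y * φ i y)) := by
      refine Finset.sum_congr rfl fun y _ => ?_
      have hv : v y = g y + ∑ i, w i * φ i y := by simp [hg]
      rw [hv, mul_add, Finset.mul_sum]
      congr 1
      exact Finset.sum_congr rfl fun i _ => by ring
    rw [step1, Finset.sum_add_distrib]
    congr 1
    rw [Finset.sum_comm]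
    exact Finset.sum_congr rfl fun i _ => by rw [Finset.mul_sum]
  rw [h1, hexp]
  have hA : |∑ y, D y * g y| ≤ TVb * supNorm g := by
    calc |∑ y, D y * g y| ≤ ∑ y, |D y * g y| := Finset.abs_sum_le_sum_abs _ _
      _ = ∑ y, |D y| * |g y| := by simp [abs_mul]
      _ ≤ ∑ y, |D y| * supNorm g :=
          Finset.sum_le_sum fun y _ =>
            mul_le_mul_of_nonneg_left (abs_le_supNorm g y) (abs_nonneg _)
      _ = (∑ y, |D y|) * supNorm g := by rw [Finset.sum_mul]
      _ ≤ TVb * supNorm g :=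
          mul_le_mul_of_nonneg_right (hTV x a) (supNorm_nonneg g)
  have hB : |∑ i, w i * ∑ y, D y * φ i y| ≤ Qb * supNorm w := by
    calc |∑ i, w i * ∑ y, D y * φ i y| ≤ ∑ i, |w i * ∑ y, D y * φ i y| :=
          Finset.abs_sum_le_sum_abs _ _
      _ = ∑ i, |w i| * |∑ y, D y * φ i y| := by simp [abs_mul]
      _ ≤ ∑ i, supNorm w * |∑ y, D y * φ i y| :=
          Finset.sum_le_sum fun i _ =>
            mul_le_mul_of_nonneg_right (abs_le_supNorm w i) (abs_nonneg _)
      _ = supNorm w * ∑ i, |∑ y, D y * φ i y| := by rw [Finset.mul_sum]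
      _ ≤ supNorm w * Qb :=
          mul_le_mul_of_nonneg_left (hQ x a) (supNorm_nonneg w)
      _ = Qb * supNorm w := mul_comm _ _
  calc |(∑ y, D y * g y) + ∑ i, w i * ∑ y, D y * φ i y|
      ≤ |∑ y, D y * g y| + |∑ i, w i * ∑ y, D y * φ i y| := abs_add_le _ _
    _ ≤ TVb * supNorm g + Qb * supNorm w := add_le_add hA hB

/-- Simulation lemma: for any policy, the value functions under `P` and `Pbar` differ by
at most `γ/(1-γ)` times the deviation bound. -/
lemma sim_bound {S A : Type*} [Fintype S] [Nonempty S] [DecidableEq S] {d : ℕ}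
    (γ : ℝ) (hγ0 : 0 ≤ γ) (hγ1 : γ < 1) (r : S → A → ℝ)
    (P Pbar : S → A → S → ℝ)
    (hP0 : ∀ x a y, 0 ≤ P x a y) (hP1 : ∀ x a, ∑ y, P x a y = 1)
    (hPbar0 : ∀ x a y, 0 ≤ Pbar x a y) (hPbar1 : ∀ x a, ∑ y, Pbar x a y = 1)
    (φ : Fin d → S → ℝ) (TVb Qb : ℝ)
    (hTV : ∀ x a, ∑ y, |P x a y - Pbar x a y| ≤ TVb)
    (hQ : ∀ x a, ∑ i : Fin d, |∑ y, (P x a y - Pbar x a y) * φ i y| ≤ Qb)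
    (μ : S → A) (w : Fin d → ℝ) :
    (1 - γ) * supNorm (fun x => polVal γ r P μ x - polVal γ r Pbar μ x) ≤
      γ * (TVb * supNorm (fun y => polVal γ r P μ y - ∑ i, w i * φ i y)
        + Qb * supNorm w) := by
  set V : S → ℝ := polVal γ r P μ with hV
  set Vb : S → ℝ := polVal γ r Pbar μ with hVb
  set Δ : S → ℝ := fun x => V x - Vb x with hΔ
  have b1 := bellman γ hγ0 hγ1 r P hP0 hP1 μ
  have b2 := bellman γ hγ0 hγ1 r Pbar hPbar0 hPbar1 μ
  have key : ∀ x, Δ x = γ * ((polMat Pbar μ).mulVec Δ x)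
      + γ * (((polMat P μ - polMat Pbar μ)).mulVec V x) := by
    intro x
    have e1 : ((polMat P μ - polMat Pbar μ)).mulVec V x
        = (polMat P μ).mulVec V x - (polMat Pbar μ).mulVec V x := by
      rw [Matrix.sub_mulVec]; simp [Pi.sub_apply]
    have e2 : (polMat Pbar μ).mulVec Δ x
        = (polMat Pbar μ).mulVec V x - (polMat Pbar μ).mulVec Vb x := by
      have : Δ = V - Vb := rfl
      rw [this, Matrix.mulVec_sub]; simp [Pi.sub_apply]
    have h1 := b1 x
    have h2 := b2 x
    simp only [hΔ]
    rw [e1, e2, ← hV, ← hVb] at *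
    linarith
  have hC : 0 ≤ TVb * supNorm (fun y => V y - ∑ i, w i * φ i y) + Qb * supNorm w := by
    have hTVb : 0 ≤ TVb := le_trans (Finset.sum_nonneg fun y _ => abs_nonneg _)
      (hTV (Classical.arbitrary S) (μ (Classical.arbitrary S)))
    have hQb : 0 ≤ Qb := le_trans (Finset.sum_nonneg fun i _ => abs_nonneg _)
      (hQ (Classical.arbitrary S) (μ (Classical.arbitrary S)))
    have := supNorm_nonneg (fun y => V y - ∑ i, w i * φ i y)
    have := supNorm_nonneg w
    positivity
  have hsup : supNorm Δ ≤ γ * supNorm Δ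
      + γ * (TVb * supNorm (fun y => V y - ∑ i, w i * φ i y) + Qb * supNorm w) := by
    apply ciSup_le
    intro x
    rw [key x]
    calc |γ * ((polMat Pbar μ).mulVec Δ x)
          + γ * (((polMat P μ - polMat Pbar μ)).mulVec V x)|
        ≤ γ * |(polMat Pbar μ).mulVec Δ x|
          + γ * |((polMat P μ - polMat Pbar μ)).mulVec V x| := by
          calc _ ≤ |γ * ((polMat Pbar μ).mulVec Δ x)|
                + |γ * (((polMat P μ - polMat Pbar μ)).mulVec V x)| := abs_add_le _ _
            _ = _ := by rw [abs_mul, abs_mul, abs_of_nonneg hγ0]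
      _ ≤ γ * supNorm Δ
          + γ * (TVb * supNorm (fun y => V y - ∑ i, w i * φ i y) + Qb * supNorm w) := by
          refine add_le_add (mul_le_mul_of_nonneg_left ?_ hγ0)
            (mul_le_mul_of_nonneg_left ?_ hγ0)
          · exact mulVec_abs_le (fun x y => hPbar0 x (μ x) y) (fun x => hPbar1 x (μ x)) Δ x
          · exact dev_bound P Pbar φ TVb Qb hTV hQ μ V w x
  have : supNorm (fun x => V x - Vb x) = supNorm Δ := rfl
  rw [this]
  linarith

theorem stmt14 {S A : Type*} [Fintype S] [Nonempty S] [DecidableEq S] [Fintype A] [Nonempty A]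
    (P Pbar : S → A → S → ℝ)
    (hP0 : ∀ x a y, 0 ≤ P x a y) (hP1 : ∀ x a, ∑ y, P x a y = 1)
    (hPbar0 : ∀ x a y, 0 ≤ Pbar x a y) (hPbar1 : ∀ x a, ∑ y, Pbar x a y = 1)
    (r : S → A → ℝ) (γ : ℝ) (hγ0 : 0 ≤ γ) (hγ1 : γ < 1)
    (d : ℕ) (φ : Fin d → S → ℝ) (εM εQ β : ℝ)
    (hεM : 0 ≤ εM) (hεQ : 0 ≤ εQ) (hβ : 0 < β)
    (hTV : ∀ x a, ∑ y, |P x a y - Pbar x a y| ≤ Real.sqrt 2 * εM + (2 / β) * εQ)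
    (hQ : ∀ x a, ∑ i : Fin d, |∑ y, (P x a y - Pbar x a y) * φ i y| ≤
      Real.sqrt d * (β * εM + 2 * εQ))
    (e₁ e₂ : ℝ)
    (he₁ : e₁ = (γ / (1 - γ)) * (Real.sqrt 2 * εM + (2 / β) * εQ))
    (he₂ : e₂ = (γ * Real.sqrt d / (1 - γ)) * (β * εM + 2 * εQ))
    (hsmall : e₁ < 1)
    (πstar πbar : S → A)
    (hopt : ∀ μ : S → A, ∀ x, polVal γ r P μ x ≤ polVal γ r P πstar x)
    (hoptbar : ∀ μ : S → A, ∀ x, polVal γ r Pbar μ x ≤ polVal γ r Pbar πbar x) :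
    ∀ w : Fin d → ℝ,
      supNorm (fun x => polVal γ r P πstar x - polVal γ r P πbar x) ≤
        (2 * e₁ / (1 - e₁)) * supNorm (fun x => polVal γ r P πstar x - ∑ i, w i * φ i x) +
          (2 * e₂ / (1 - e₁)) * supNorm w := by
  intro w
  set TVb : ℝ := Real.sqrt 2 * εM + (2 / β) * εQ with hTVb
  set Qb : ℝ := Real.sqrt d * (β * εM + 2 * εQ) with hQb
  have hγ' : (0:ℝ) < 1 - γ := by linarith
  have hTVb0 : 0 ≤ TVb := by
    have := Real.sqrt_nonneg (2:ℝ)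
    have : 0 ≤ Real.sqrt 2 * εM := mul_nonneg (Real.sqrt_nonneg _) hεM
    have : 0 ≤ (2 / β) * εQ := mul_nonneg (by positivity) hεQ
    positivity
  have hQb0 : 0 ≤ Qb := by positivity
  have he₁0 : 0 ≤ e₁ := by
    rw [he₁]; exact mul_nonneg (div_nonneg hγ0 (le_of_lt hγ')) hTVb0
  have he₂0 : 0 ≤ e₂ := by
    rw [he₂]
    refine mul_nonneg (div_nonneg (mul_nonneg hγ0 (Real.sqrt_nonneg _)) (le_of_lt hγ')) ?_
    positivity
  have h1e : (0:ℝ) < 1 - e₁ := by linarith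
  set Vs : S → ℝ := polVal γ r P πstar with hVs
  set Vb : S → ℝ := polVal γ r P πbar with hVb
  set Vsb : S → ℝ := polVal γ r Pbar πstar with hVsb
  set Vbb : S → ℝ := polVal γ r Pbar πbar with hVbb
  set η : ℝ := supNorm (fun x => Vs x - ∑ i, w i * φ i x) with hη
  set W : ℝ := supNorm w with hW
  set Dn : ℝ := supNorm (fun x => Vs x - Vb x) with hDn
  -- simulation bounds for the two policies
  have simS := sim_bound γ hγ0 hγ1 r P Pbar hP0 hP1 hPbar0 hPbar1 φ TVb Qb hTV hQ πstar w
  have simB := sim_bound γ hγ0 hγ1 r P Pbar hP0 hP1 hPbar0 hPbar1 φ TVb Qb hTV hQ πbar w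
  have hη0 : 0 ≤ η := supNorm_nonneg _
  have hW0 : 0 ≤ W := supNorm_nonneg _
  have hDn0 : 0 ≤ Dn := supNorm_nonneg _
  -- e₁ and e₂ relations
  have hce1 : γ * TVb = (1 - γ) * e₁ := by
    rw [he₁]; field_simp
  have hce2 : γ * Qb = (1 - γ) * e₂ := by
    rw [he₂, hQb]; field_simp
  -- bound ηbar := supNorm (Vb - Φw) ≤ Dn + η
  have hηbar : supNorm (fun x => Vb x - ∑ i, w i * φ i x) ≤ Dn + η := by
    apply ciSup_le
    intro x
    have h1 : |Vb x - ∑ i, w i * φ i x|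
        ≤ |Vb x - Vs x| + |Vs x - ∑ i, w i * φ i x| := by
      have : Vb x - ∑ i, w i * φ i x = (Vb x - Vs x) + (Vs x - ∑ i, w i * φ i x) := by ring
      rw [this]; exact abs_add_le _ _
    have h2 : |Vb x - Vs x| ≤ Dn := by
      rw [abs_sub_comm]; exact abs_le_supNorm (fun x => Vs x - Vb x) x
    have h3 : |Vs x - ∑ i, w i * φ i x| ≤ η :=
      abs_le_supNorm (fun x => Vs x - ∑ i, w i * φ i x) x
    linarith
  -- A := supNorm (Vs - Vsb) ≤ e₁ η + e₂ W
  have hA : supNorm (fun x => Vs x - Vsb x) ≤ e₁ * η + e₂ * W := by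
    have h := simS
    have hchain : γ * (TVb * η + Qb * W) = (1 - γ) * (e₁ * η + e₂ * W) := by
      have : γ * (TVb * η + Qb * W) = (γ * TVb) * η + (γ * Qb) * W := by ring
      rw [this, hce1, hce2]; ring
    rw [← hη, ← hW] at h
    rw [hchain] at h
    exact le_of_mul_le_mul_left (by linarith [h]) hγ'
  -- B := supNorm (Vb - Vbb) ≤ e₁ (Dn + η) + e₂ W
  have hB : supNorm (fun x => Vb x - Vbb x) ≤ e₁ * (Dn + η) + e₂ * W := by
    have h := simB
    set ηb : ℝ := supNorm (fun y => Vb y - ∑ i, w i * φ i y) with hηb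
    have hchain : γ * (TVb * ηb + Qb * W) = (1 - γ) * (e₁ * ηb + e₂ * W) := by
      have : γ * (TVb * ηb + Qb * W) = (γ * TVb) * ηb + (γ * Qb) * W := by ring
      rw [this, hce1, hce2]; ring
    rw [← hW, hchain] at h
    have h' : supNorm (fun x => Vb x - Vbb x) ≤ e₁ * ηb + e₂ * W :=
      le_of_mul_le_mul_left (by linarith [h]) hγ'
    have : e₁ * ηb ≤ e₁ * (Dn + η) := mul_le_mul_of_nonneg_left hηbar he₁0
    linarith
  -- Dn ≤ A + B
  have hDle : Dn ≤ supNorm (fun x => Vs x - Vsb x) + supNorm (fun x => Vb x - Vbb x) := by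
    apply ciSup_le
    intro x
    have h1 : 0 ≤ Vs x - Vb x := by
      have h := hopt πbar x; rw [hVb]; linarith
    have h2 : Vsb x ≤ Vbb x := hoptbar πstar x
    have h3 : Vs x - Vb x ≤ (Vs x - Vsb x) + (Vbb x - Vb x) := by linarith
    have h4 : Vs x - Vsb x ≤ |Vs x - Vsb x| := le_abs_self _
    have h5 : Vbb x - Vb x ≤ |Vb x - Vbb x| := by rw [abs_sub_comm]; exact le_abs_self _
    have h6 : |Vs x - Vsb x| ≤ supNorm (fun x => Vs x - Vsb x) :=
      abs_le_supNorm (fun x => Vs x - Vsb x) x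
    have h7 : |Vb x - Vbb x| ≤ supNorm (fun x => Vb x - Vbb x) :=
      abs_le_supNorm (fun x => Vb x - Vbb x) x
    rw [abs_of_nonneg h1]
    linarith
  -- combine
  have hfinal : (1 - e₁) * Dn ≤ 2 * e₁ * η + 2 * e₂ * W := by nlinarith [hA, hB, hDle]
  rw [div_mul_eq_mul_div, div_mul_eq_mul_div, ← add_div, le_div_iff₀ h1e]
  nlinarith [hfinal]
end

section
/- Let P, P̂, P̄ ∈ ℝ^{S×S} be row-stochastic matrices with, for every x, the support of P(x,·) contained in the support of P̂(x,·) and the supports of P(x,·) and P̄(x,·) contained in the support of P̂(x,·); let γ ∈ [0,1), r ∈ ℝ^S, φ₁,…,φ_d : S → ℝ, and ψ : S → ℝ^d. Define εM(x) := √(KL(P(x,·)‖P̂(x,·))) and εQ(x) := ‖(Pφ)(x) − ψ(x)‖₂, where (Pφ)(x) ∈ ℝ^d has entries ∑_y P(x,y)·φᵢ(y). Assume ‖εM‖∞ > 0 and ‖εQ‖∞ > 0, set β := ‖εQ‖∞/‖εM‖∞, and assume for every x ∈ S: (i) KL(P(x,·)‖P̄(x,·)) ≤ KL(P(x,·)‖P̂(x,·))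 + (2/β²)·εQ(x)²; (ii) KL(P̄(x,·)‖P̂(x,·)) + (1/β²)·‖(P̄φ)(x) − ψ(x)‖₂² ≤ KL(P(x,·)‖P̂(x,·)) + (1/β²)·εQ(x)². Then, with V := (I − γP)⁻¹ r, V̄ := (I − γP̄)⁻¹ r, c₁ := γ√2/(1−γ), and c₂ := 3γ√d/(1−γ), for every w ∈ ℝ^d: ‖V − V̄‖∞ ≤ 3c₁·‖εM‖∞·‖V − ∑_{i=1}^d wᵢφᵢ‖∞ + c₂·‖εQ‖∞·‖w‖∞. -/
open Finset Matrix

/-- KL divergence of finitely supported probability vectors,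
with the convention `0 * log 0 = 0` (automatic since `Real.log 0 = 0`). -/
noncomputable def KLfin {S : Type*} [Fintype S] (p q : S → ℝ) : ℝ :=
  ∑ y, p y * Real.log (p y / q y)

lemma le_of_sq_le_sq' {a b : ℝ} (h : a^2 ≤ b^2) (hb : 0 ≤ b) : a ≤ b := by
  nlinarith [le_abs_self a, abs_nonneg a, sq_abs a]

noncomputable def Gfun (t : ℝ) : ℝ := 2*(t+2)*(t*Real.log t - t + 1) - 3*(t-1)^2

lemma hasDerivAt_Gfun {t : ℝ} (ht : t ≠ 0) :
    HasDerivAt Gfun (4*((t+1)*Real.log t - 2*(t-1))) t := by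
  have h1 : HasDerivAt (fun t : ℝ => t * Real.log t - t + 1) (Real.log t) t := by
    simpa using ((Real.hasDerivAt_mul_log ht).sub (hasDerivAt_id t)).add_const 1
  have h2 : HasDerivAt (fun t : ℝ => 2*(t+2)) 2 t := by
    simpa using ((hasDerivAt_id t).add_const 2).const_mul (2:ℝ)
  have h3 : HasDerivAt (fun t : ℝ => 3*(t-1)^2) (3*(2*(t-1)^1*1)) t :=
    (((hasDerivAt_id t).sub_const 1).pow 2).const_mul (3:ℝ)
  have h4 := (h2.mul h1).sub h3
  exact h4.congr_deriv (by ring)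

lemma hfun_hasDeriv {t : ℝ} (ht : t ≠ 0) :
    HasDerivAt (fun u : ℝ => (u+1)*Real.log u - 2*(u-1)) (Real.log t + (t+1)*t⁻¹ - 2) t := by
  have h1 : HasDerivAt (fun u : ℝ => (u+1)*Real.log u) (1*Real.log t + (t+1)*t⁻¹) t :=
    ((hasDerivAt_id t).add_const 1).mul (Real.hasDerivAt_log ht)
  have h2 : HasDerivAt (fun u : ℝ => 2*(u-1)) 2 t := by
    simpa using ((hasDerivAt_id t).sub_const 1).const_mul (2:ℝ)
  have := h1.sub h2
  exact this.congr_deriv (by ring)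

lemma hfun_sign {t : ℝ} (ht : 0 < t) :
    (1 ≤ t → 0 ≤ (t+1)*Real.log t - 2*(t-1)) ∧ (t ≤ 1 → (t+1)*Real.log t - 2*(t-1) ≤ 0) := by
  set h : ℝ → ℝ := fun u => (u+1)*Real.log u - 2*(u-1) with hh
  have hdiff : DifferentiableOn ℝ h (Set.Ioi 0) := fun u hu =>
    ((hfun_hasDeriv (ne_of_gt hu)).differentiableAt).differentiableWithinAt
  have hmono : MonotoneOn h (Set.Ioi 0) := by
    apply monotoneOn_of_deriv_nonneg (convex_Ioi 0) hdiff.continuousOn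
    · rw [interior_Ioi]; exact hdiff
    · intro u hu
      rw [interior_Ioi] at hu
      rw [(hfun_hasDeriv (ne_of_gt hu)).deriv]
      have h1 : 1 - u⁻¹ ≤ Real.log u := Real.one_sub_inv_le_log_of_pos hu
      have hu0 : u ≠ 0 := ne_of_gt hu
      have h2 : (u+1)*u⁻¹ = 1 + u⁻¹ := by field_simp
      rw [h2]; linarith
  have h1 : h 1 = 0 := by simp [hh]
  constructor
  · intro h1t
    have := hmono (Set.mem_Ioi.mpr one_pos) (Set.mem_Ioi.mpr ht) h1t
    rw [h1] at this; exact this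
  · intro ht1
    have := hmono (Set.mem_Ioi.mpr ht) (Set.mem_Ioi.mpr one_pos) ht1
    rw [h1] at this; exact this

lemma Gfun_nonneg {t : ℝ} (ht : 0 ≤ t) : 0 ≤ Gfun t := by
  rcases eq_or_lt_of_le ht with h0 | htpos
  · simp [Gfun, ← h0]; norm_num
  have hG1 : Gfun 1 = 0 := by simp [Gfun]
  rcases le_total 1 t with h1t | ht1
  · have hmono : MonotoneOn Gfun (Set.Ici 1) := by
      apply monotoneOn_of_deriv_nonneg (convex_Ici 1)
      · intro u hu
        exact ((hasDerivAt_Gfun (ne_of_gt (lt_of_lt_of_le one_pos hu))).differentiableAt).continuousAt.continuousWithinAt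
      · rw [interior_Ici]
        intro u hu
        have hu1 : (1:ℝ) < u := hu
        exact ((hasDerivAt_Gfun (ne_of_gt (lt_trans one_pos hu1))).differentiableAt).differentiableWithinAt
      · rw [interior_Ici]
        intro u hu
        have hu1 : (1:ℝ) < u := hu
        rw [(hasDerivAt_Gfun (ne_of_gt (lt_trans one_pos hu1))).deriv]
        have := (hfun_sign (lt_trans one_pos hu1)).1 hu1.le
        linarith
    have := hmono (Set.mem_Ici.mpr le_rfl) (Set.mem_Ici.mpr h1t) h1t
    rw [hG1] at this; exact this
  · have hanti : AntitoneOn Gfun (Set.Ioc 0 1) := by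
      apply antitoneOn_of_deriv_nonpos (convex_Ioc 0 1)
      · intro u hu
        exact ((hasDerivAt_Gfun (ne_of_gt hu.1)).differentiableAt).continuousAt.continuousWithinAt
      · rw [interior_Ioc]
        intro u hu
        exact ((hasDerivAt_Gfun (ne_of_gt hu.1)).differentiableAt).differentiableWithinAt
      · rw [interior_Ioc]
        intro u hu
        rw [(hasDerivAt_Gfun (ne_of_gt hu.1)).deriv]
        have := (hfun_sign hu.1).2 hu.2.le
        linarith
    have := hanti (Set.mem_Ioc.mpr ⟨htpos, ht1⟩) (Set.mem_Ioc.mpr ⟨one_pos, le_rfl⟩) ht1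
    rw [hG1] at this; exact this

lemma kl_term_ge {p q : ℝ} (hp : 0 ≤ p) (hq : 0 ≤ q) (hsupp : q = 0 → p = 0) :
    p - q + 3/2 * ((p-q)^2 / (p + 2*q)) ≤ p * Real.log (p/q) := by
  rcases eq_or_lt_of_le hq with h0 | hqpos
  · have hp0 : p = 0 := hsupp h0.symm
    simp [hp0, ← h0]
  · have hq0 : q ≠ 0 := ne_of_gt hqpos
    have hG := Gfun_nonneg (t := p/q) (div_nonneg hp hq)
    rw [Gfun] at hG
    set L := Real.log (p/q) with hL
    have hq2 : 0 < p + 2*q := by linarith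
    rw [← sub_nonneg]
    have key : q^2 * (2*(p/q+2)*((p/q)*L - p/q + 1) - 3*(p/q-1)^2)
        = 2*((p*L - (p - q + 3/2 * ((p-q)^2 / (p + 2*q))))*(p+2*q)) + ((p-q)^2*2 - 2*(p-q)^2) := by
      field_simp
      ring
    have hmul := mul_nonneg (sq_nonneg q) hG
    rw [key] at hmul
    have h2 : 0 ≤ (p*L - (p - q + 3/2 * ((p-q)^2 / (p + 2*q))))*(p+2*q) := by linarith
    rw [mul_comm] at h2
    exact nonneg_of_mul_nonneg_right h2 hq2

lemma pinsker_sq {S : Type*} [Fintype S] (p q : S → ℝ)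
    (hp0 : ∀ y, 0 ≤ p y) (hq0 : ∀ y, 0 ≤ q y)
    (hp1 : ∑ y, p y = 1) (hq1 : ∑ y, q y = 1)
    (hsupp : ∀ y, q y = 0 → p y = 0) :
    (∑ y, |p y - q y|) ^ 2 ≤ 2 * KLfin p q := by
  have hKLge : (3:ℝ)/2 * ∑ y, (p y - q y)^2 / (p y + 2*q y) ≤ KLfin p q := by
    have h1 : ∑ y, (p y - q y + 3/2 * ((p y - q y)^2 / (p y + 2*q y)))
        ≤ ∑ y, p y * Real.log (p y / q y) :=
      Finset.sum_le_sum fun y _ => kl_term_ge (hp0 y) (hq0 y) (hsupp y)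
    rw [Finset.sum_add_distrib, Finset.sum_sub_distrib, hp1, hq1, ← Finset.mul_sum] at h1
    simpa [KLfin] using h1
  have hCS := Finset.sum_mul_sq_le_sq_mul_sq Finset.univ
    (fun y => |p y - q y| / Real.sqrt (p y + 2*q y)) (fun y => Real.sqrt (p y + 2*q y))
  have hfg : ∀ y : S, |p y - q y| / Real.sqrt (p y + 2*q y) * Real.sqrt (p y + 2*q y) = |p y - q y| := by
    intro y
    rcases eq_or_lt_of_le (by have := hp0 y; have := hq0 y; linarith : (0:ℝ) ≤ p y + 2*q y) with h0 | hpos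
    · have hpy : p y = 0 := by nlinarith [hp0 y, hq0 y]
      have hqy : q y = 0 := by nlinarith [hp0 y, hq0 y]
      simp [hpy, hqy]
    · rw [div_mul_cancel₀]
      exact ne_of_gt (Real.sqrt_pos.mpr hpos)
  have hf2 : ∀ y : S, (|p y - q y| / Real.sqrt (p y + 2*q y))^2 = (p y - q y)^2 / (p y + 2*q y) := by
    intro y
    rw [div_pow, sq_abs, Real.sq_sqrt (by have := hp0 y; have := hq0 y; linarith)]
  have hg2 : ∀ y : S, (Real.sqrt (p y + 2*q y))^2 = p y + 2*q y := fun y =>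
    Real.sq_sqrt (by have := hp0 y; have := hq0 y; linarith)
  simp only [hfg, hf2, hg2] at hCS
  have hsum3 : ∑ y, (p y + 2*q y) = 3 := by
    rw [Finset.sum_add_distrib, hp1, ← Finset.mul_sum, hq1]; norm_num
  rw [hsum3] at hCS
  calc (∑ y, |p y - q y|) ^ 2 ≤ (∑ y, (p y - q y)^2 / (p y + 2*q y)) * 3 := hCS
    _ ≤ 2 * KLfin p q := by linarith

lemma KLfin_nonneg {S : Type*} [Fintype S] (p q : S → ℝ)
    (hp0 : ∀ y, 0 ≤ p y) (hq0 : ∀ y, 0 ≤ q y)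
    (hp1 : ∑ y, p y = 1) (hq1 : ∑ y, q y = 1)
    (hsupp : ∀ y, q y = 0 → p y = 0) : 0 ≤ KLfin p q := by
  have := pinsker_sq p q hp0 hq0 hp1 hq1 hsupp
  nlinarith [sq_nonneg (∑ y, |p y - q y|)]

lemma le_supNorm {S : Type*} [Fintype S] (v : S → ℝ) (x : S) : v x ≤ supNorm v :=
  (le_abs_self _).trans (abs_le_supNorm v x)

lemma exists_supNorm {S : Type*} [Fintype S] [Nonempty S] (v : S → ℝ) :
    ∃ x, supNorm v = |v x| := by
  obtain ⟨x, hx⟩ := Finite.exists_max (fun x => |v x|)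
  exact ⟨x, le_antisymm (ciSup_le hx) (abs_le_supNorm v x)⟩

lemma sqrt_sum_sq_sub {ι : Type*} [Fintype ι] (b c : ι → ℝ) :
    Real.sqrt (∑ i, (b i - c i)^2) ≤ Real.sqrt (∑ i, b i ^ 2) + Real.sqrt (∑ i, c i ^ 2) := by
  set X := Real.sqrt (∑ i, b i ^ 2) with hX
  set Y := Real.sqrt (∑ i, c i ^ 2) with hY
  have hX0 : 0 ≤ X := Real.sqrt_nonneg _
  have hY0 : 0 ≤ Y := Real.sqrt_nonneg _
  have hX2 : X^2 = ∑ i, b i ^ 2 := Real.sq_sqrt (by positivity)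
  have hY2 : Y^2 = ∑ i, c i ^ 2 := Real.sq_sqrt (by positivity)
  have hCS : (∑ i, b i * c i)^2 ≤ (X*Y)^2 := by
    rw [mul_pow, hX2, hY2]
    exact Finset.sum_mul_sq_le_sq_mul_sq Finset.univ b c
  have habs : |∑ i, b i * c i| ≤ X*Y := by
    apply le_of_sq_le_sq' _ (mul_nonneg hX0 hY0)
    rw [sq_abs]; exact hCS
  have hexp : ∑ i, (b i - c i)^2 = (∑ i, b i^2) - 2*(∑ i, b i * c i) + ∑ i, c i^2 := by
    rw [Finset.mul_sum, ← Finset.sum_sub_distrib, ← Finset.sum_add_distrib]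
    exact Finset.sum_congr rfl fun i _ => by ring
  have key : ∑ i, (b i - c i)^2 ≤ (X+Y)^2 := by
    have := neg_abs_le (∑ i, b i * c i)
    nlinarith
  calc Real.sqrt (∑ i, (b i - c i)^2) ≤ Real.sqrt ((X+Y)^2) := Real.sqrt_le_sqrt key
    _ = X + Y := Real.sqrt_sq (by linarith)

lemma sum_abs_le_sqrt_card {d : ℕ} (a : Fin d → ℝ) :
    ∑ i, |a i| ≤ Real.sqrt d * Real.sqrt (∑ i, a i ^ 2) := by
  have hCS := Finset.sum_mul_sq_le_sq_mul_sq Finset.univ (fun _ : Fin d => (1:ℝ)) (fun i => |a i|)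
  simp only [one_mul, one_pow, Finset.sum_const, Finset.card_univ, Fintype.card_fin,
    nsmul_eq_mul, mul_one, sq_abs] at hCS
  apply le_of_sq_le_sq' _ (by positivity)
  rw [mul_pow, Real.sq_sqrt (Nat.cast_nonneg d), Real.sq_sqrt (by positivity)]
  exact hCS

lemma stoch_det_ne_zero {S : Type*} [Fintype S] [DecidableEq S]
    (P : Matrix S S ℝ) (γ : ℝ) (hP0 : ∀ x y, 0 ≤ P x y) (hP1 : ∀ x, ∑ y, P x y = 1)
    (hγ0 : 0 ≤ γ) (hγ1 : γ < 1) : ((1 : Matrix S S ℝ) - γ • P).det ≠ 0 := by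
  apply det_ne_zero_of_sum_row_lt_diag
  intro k
  have hPkk : P k k ≤ 1 := by
    rw [← hP1 k]
    exact Finset.single_le_sum (fun y _ => hP0 k y) (Finset.mem_univ k)
  have hdiag : ‖((1 : Matrix S S ℝ) - γ • P) k k‖ = 1 - γ * P k k := by
    rw [Matrix.sub_apply, Matrix.smul_apply, Matrix.one_apply_eq, smul_eq_mul,
      Real.norm_eq_abs, abs_of_nonneg]
    nlinarith [hP0 k k]
  have hoff : ∀ j ∈ Finset.univ.erase k, ‖((1 : Matrix S S ℝ) - γ • P) k j‖ = γ * P k j := by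
    intro j hj
    have hjk : j ≠ k := (Finset.mem_erase.mp hj).1
    rw [Matrix.sub_apply, Matrix.smul_apply, Matrix.one_apply_ne (Ne.symm hjk), smul_eq_mul,
      Real.norm_eq_abs, zero_sub, abs_neg, abs_of_nonneg (mul_nonneg hγ0 (hP0 k j))]
  rw [hdiag, Finset.sum_congr rfl hoff]
  have hsum : ∑ j ∈ Finset.univ.erase k, γ * P k j = γ * (1 - P k k) := by
    rw [← Finset.mul_sum, Finset.sum_erase_eq_sub (Finset.mem_univ k), hP1 k]
  rw [hsum]
  nlinarith [hP0 k k]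

lemma stoch_fixed_point {S : Type*} [Fintype S] [DecidableEq S]
    (P : Matrix S S ℝ) (γ : ℝ) (hP0 : ∀ x y, 0 ≤ P x y) (hP1 : ∀ x, ∑ y, P x y = 1)
    (hγ0 : 0 ≤ γ) (hγ1 : γ < 1) (r V : S → ℝ)
    (hV : V = ((1 : Matrix S S ℝ) - γ • P)⁻¹.mulVec r) :
    ∀ x, V x = r x + γ * ∑ y, P x y * V y := by
  have hdet := stoch_det_ne_zero P γ hP0 hP1 hγ0 hγ1
  have hVr : ((1 : Matrix S S ℝ) - γ • P).mulVec V = r := by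
    rw [hV, Matrix.mulVec_mulVec, Matrix.mul_nonsing_inv _ (isUnit_iff_ne_zero.mpr hdet),
      Matrix.one_mulVec]
  intro x
  have h := congrFun hVr x
  rw [Matrix.sub_mulVec, Matrix.smul_mulVec, Matrix.one_mulVec] at h
  have h2 : V x - γ * ∑ y, P x y * V y = r x := by
    simpa [Matrix.mulVec, dotProduct] using h
  linarith

set_option maxHeartbeats 2000000 in
theorem stmt15 {S : Type*} [Fintype S] [Nonempty S] [DecidableEq S]
    (P Phat Pbar : Matrix S S ℝ) (γ : ℝ)
    (hP0 : ∀ x y, 0 ≤ P x y) (hP1 : ∀ x, ∑ y, P x y = 1)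
    (hPhat0 : ∀ x y, 0 ≤ Phat x y) (hPhat1 : ∀ x, ∑ y, Phat x y = 1)
    (hPbar0 : ∀ x y, 0 ≤ Pbar x y) (hPbar1 : ∀ x, ∑ y, Pbar x y = 1)
    (hsuppP : ∀ x y, Phat x y = 0 → P x y = 0)
    (hsuppPbar : ∀ x y, Phat x y = 0 → Pbar x y = 0)
    (hγ0 : 0 ≤ γ) (hγ1 : γ < 1)
    (r : S → ℝ) (d : ℕ) (φ : Fin d → S → ℝ) (ψ : S → Fin d → ℝ)
    (εM εQ : S → ℝ)
    (hεM : ∀ x, εM x = Real.sqrt (KLfin (fun y => P x y) (fun y => Phat x y)))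
    (hεQ : ∀ x, εQ x = Real.sqrt (∑ i : Fin d, ((∑ y, P x y * φ i y) - ψ x i) ^ 2))
    (hεMpos : 0 < supNorm εM) (hεQpos : 0 < supNorm εQ)
    (β : ℝ) (hβ : β = supNorm εQ / supNorm εM)
    (hKL : ∀ x, KLfin (fun y => P x y) (fun y => Pbar x y) ≤
      KLfin (fun y => P x y) (fun y => Phat x y) + (2 / β ^ 2) * (εQ x) ^ 2)
    (hObj : ∀ x,
      KLfin (fun y => Pbar x y) (fun y => Phat x y) +
          (1 / β ^ 2) * (∑ i : Fin d, ((∑ y, Pbar x y * φ i y) - ψ x i) ^ 2) ≤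
        KLfin (fun y => P x y) (fun y => Phat x y) + (1 / β ^ 2) * (εQ x) ^ 2)
    (V Vbar : S → ℝ)
    (hV : V = ((1 : Matrix S S ℝ) - γ • P)⁻¹.mulVec r)
    (hVbar : Vbar = ((1 : Matrix S S ℝ) - γ • Pbar)⁻¹.mulVec r)
    (c₁ c₂ : ℝ)
    (hc₁ : c₁ = γ * Real.sqrt 2 / (1 - γ))
    (hc₂ : c₂ = 3 * γ * Real.sqrt d / (1 - γ)) :
    ∀ w : Fin d → ℝ,
      supNorm (fun x => V x - Vbar x) ≤
        3 * c₁ * supNorm εM * supNorm (fun x => V x - ∑ i, w i * φ i x) +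
          c₂ * supNorm εQ * supNorm w := by
  intro w
  set εm := supNorm εM with hεmdef
  set εq := supNorm εQ with hεqdef
  have hεm0 : 0 < εm := hεMpos
  have hεq0 : 0 < εq := hεQpos
  have hs1 : (1:ℝ) ≤ Real.sqrt 2 := by
    nlinarith [Real.sq_sqrt (show (0:ℝ) ≤ 2 by norm_num), Real.sqrt_nonneg 2]
  have hs2 : Real.sqrt 2 ≤ 2 := by
    nlinarith [Real.sq_sqrt (show (0:ℝ) ≤ 2 by norm_num), Real.sqrt_nonneg 2]
  have hβpos : 0 < β := by rw [hβ]; exact div_pos hεq0 hεm0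
  have hβ2 : β^2 = εq^2 / εm^2 := by rw [hβ]; rw [div_pow]
  set E := supNorm (fun x => V x - ∑ i, w i * φ i x) with hEdef
  set W := supNorm w with hWdef
  have hE0 : 0 ≤ E := supNorm_nonneg _
  have hW0 : 0 ≤ W := supNorm_nonneg _
  -- KL facts
  have hKL1nn : ∀ x, 0 ≤ KLfin (fun y => P x y) (fun y => Phat x y) :=
    fun x => KLfin_nonneg _ _ (hP0 x) (hPhat0 x) (hP1 x) (hPhat1 x) (hsuppP x)
  have hKL2nn : ∀ x, 0 ≤ KLfin (fun y => Pbar x y) (fun y => Phat x y) :=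
    fun x => KLfin_nonneg _ _ (hPbar0 x) (hPhat0 x) (hPbar1 x) (hPhat1 x) (hsuppPbar x)
  have hPin1 : ∀ x, (∑ y, |P x y - Phat x y|)^2 ≤ 2 * KLfin (fun y => P x y) (fun y => Phat x y) :=
    fun x => pinsker_sq _ _ (hP0 x) (hPhat0 x) (hP1 x) (hPhat1 x) (hsuppP x)
  have hPin2 : ∀ x, (∑ y, |Pbar x y - Phat x y|)^2 ≤ 2 * KLfin (fun y => Pbar x y) (fun y => Phat x y) :=
    fun x => pinsker_sq _ _ (hPbar0 x) (hPhat0 x) (hPbar1 x) (hPhat1 x) (hsuppPbar x)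
  have hMx0 : ∀ x, 0 ≤ εM x := fun x => by rw [hεM x]; exact Real.sqrt_nonneg _
  have hMx : ∀ x, εM x ≤ εm := fun x => le_supNorm εM x
  have hQx0 : ∀ x, 0 ≤ εQ x := fun x => by rw [hεQ x]; exact Real.sqrt_nonneg _
  have hQx : ∀ x, εQ x ≤ εq := fun x => le_supNorm εQ x
  have hM2 : ∀ x, εM x ^ 2 = KLfin (fun y => P x y) (fun y => Phat x y) := fun x => by
    rw [hεM x, Real.sq_sqrt (hKL1nn x)]
  have hKLPm : ∀ x, KLfin (fun y => P x y) (fun y => Phat x y) ≤ εm^2 := by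
    intro x
    rw [← hM2 x]
    nlinarith [hMx0 x, hMx x]
  have hfrac : ∀ x, (1/β^2) * εQ x ^ 2 ≤ εm^2 := by
    intro x
    have h1 : εQ x ^2 ≤ εq^2 := by nlinarith [hQx0 x, hQx x]
    have h2 : (1/β^2) * εQ x ^2 ≤ (1/β^2) * εq^2 :=
      mul_le_mul_of_nonneg_left h1 (by positivity)
    have h3 : (1/β^2) * εq^2 = εm^2 := by
      rw [hβ2]; field_simp
    linarith
  have hccsum : ∀ x, (∑ i, ((∑ y, Pbar x y * φ i y) - ψ x i)^2) ≤ 2 * εq^2 := by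
    intro x
    have h := hObj x
    have h3 := hfrac x
    have hKnn := hKL2nn x
    have hMm := hKLPm x
    have h4 : (1/β^2) * (∑ i, ((∑ y, Pbar x y * φ i y) - ψ x i)^2) ≤ 2 * εm^2 := by linarith
    have hβ2pos : (0:ℝ) < β^2 := by positivity
    have h6 : (∑ i, ((∑ y, Pbar x y * φ i y) - ψ x i)^2)
        = β^2 * ((1/β^2) * (∑ i, ((∑ y, Pbar x y * φ i y) - ψ x i)^2)) := by
      field_simp
    rw [h6]
    calc β^2 * ((1/β^2) * (∑ i, ((∑ y, Pbar x y * φ i y) - ψ x i)^2))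
        ≤ β^2 * (2 * εm^2) := mul_le_mul_of_nonneg_left h4 hβ2pos.le
      _ = 2 * εq^2 := by rw [hβ2]; field_simp
  have hL1P : ∀ x, ∑ y, |P x y - Phat x y| ≤ Real.sqrt 2 * εm := by
    intro x
    apply le_of_sq_le_sq' _ (mul_nonneg (Real.sqrt_nonneg 2) hεm0.le)
    rw [mul_pow, Real.sq_sqrt (show (0:ℝ) ≤ 2 by norm_num)]
    nlinarith [hPin1 x, hKLPm x]
  have hL1bar : ∀ x, ∑ y, |Pbar x y - Phat x y| ≤ 2 * εm := by
    intro x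
    apply le_of_sq_le_sq' _ (by linarith)
    have hKb : KLfin (fun y => Pbar x y) (fun y => Phat x y) ≤ 2 * εm^2 := by
      have h := hObj x
      have h3 := hfrac x
      have hMm := hKLPm x
      have h2 : 0 ≤ (1/β^2) * (∑ i, ((∑ y, Pbar x y * φ i y) - ψ x i)^2) := by
        apply mul_nonneg (by positivity)
        exact Finset.sum_nonneg fun i _ => sq_nonneg _
      linarith
    nlinarith [hPin2 x]
  -- key bound on the perturbation term
  have hu : ∀ x, |∑ y, (P x y - Pbar x y) * V y|
      ≤ 3*Real.sqrt 2*εm*E + 3*Real.sqrt d*εq*W := by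
    intro x
    have hinner : ∀ i : Fin d, ∑ y, (P x y - Pbar x y) * φ i y
        = ((∑ y, P x y * φ i y) - ψ x i) - ((∑ y, Pbar x y * φ i y) - ψ x i) := by
      intro i
      rw [show ((∑ y, P x y * φ i y) - ψ x i) - ((∑ y, Pbar x y * φ i y) - ψ x i)
          = (∑ y, P x y * φ i y) - (∑ y, Pbar x y * φ i y) from by ring,
        ← Finset.sum_sub_distrib]
      exact Finset.sum_congr rfl fun y _ => by ring
    have hsplit : ∑ y, (P x y - Pbar x y) * V y
        = (∑ y, (P x y - Pbar x y) * (V y - ∑ i, w i * φ i y))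
          + ∑ i, w i * (((∑ y, P x y * φ i y) - ψ x i) - ((∑ y, Pbar x y * φ i y) - ψ x i)) := by
      calc ∑ y, (P x y - Pbar x y) * V y
          = ∑ y, ((P x y - Pbar x y) * (V y - ∑ i, w i * φ i y)
              + ∑ i, w i * ((P x y - Pbar x y) * φ i y)) := by
            refine Finset.sum_congr rfl fun y _ => ?_
            have hsum : ∑ i, w i * ((P x y - Pbar x y) * φ i y)
                = (P x y - Pbar x y) * ∑ i, w i * φ i y := by
              rw [Finset.mul_sum]
              exact Finset.sum_congr rfl fun i _ => by ring
            rw [hsum]; ring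
        _ = (∑ y, (P x y - Pbar x y) * (V y - ∑ i, w i * φ i y))
              + ∑ y, ∑ i, w i * ((P x y - Pbar x y) * φ i y) := Finset.sum_add_distrib
        _ = _ := by
            rw [Finset.sum_comm]
            congr 1
            refine Finset.sum_congr rfl fun i _ => ?_
            rw [← Finset.mul_sum, hinner i]
    rw [hsplit]
    have hA1 : |∑ y, (P x y - Pbar x y) * (V y - ∑ i, w i * φ i y)| ≤ 3*Real.sqrt 2*εm*E := by
      have t1 : |∑ y, (P x y - Pbar x y) * (V y - ∑ i, w i * φ i y)|
          ≤ ∑ y, |P x y - Pbar x y| * |V y - ∑ i, w i * φ i y| := by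
        refine (Finset.abs_sum_le_sum_abs _ _).trans (le_of_eq ?_)
        exact Finset.sum_congr rfl fun y _ => abs_mul _ _
      have hey : ∀ y, |V y - ∑ i, w i * φ i y| ≤ E := fun y =>
        abs_le_supNorm (fun x => V x - ∑ i, w i * φ i x) y
      have t2 : ∑ y, |P x y - Pbar x y| * |V y - ∑ i, w i * φ i y|
          ≤ ∑ y, |P x y - Pbar x y| * E :=
        Finset.sum_le_sum fun y _ => mul_le_mul_of_nonneg_left (hey y) (abs_nonneg _)
      have t3 : ∑ y, |P x y - Pbar x y| * E = (∑ y, |P x y - Pbar x y|) * E :=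
        (Finset.sum_mul _ _ _).symm
      have t5 : ∑ y, |P x y - Pbar x y|
          ≤ (∑ y, |P x y - Phat x y|) + ∑ y, |Pbar x y - Phat x y| := by
        rw [← Finset.sum_add_distrib]
        refine Finset.sum_le_sum fun y _ => ?_
        calc |P x y - Pbar x y| ≤ |P x y - Phat x y| + |Phat x y - Pbar x y| := abs_sub_le _ _ _
          _ = |P x y - Phat x y| + |Pbar x y - Phat x y| := by rw [abs_sub_comm (Phat x y)]
      have t4 : ∑ y, |P x y - Pbar x y| ≤ 3*Real.sqrt 2*εm := by
        have := hL1P x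
        have := hL1bar x
        nlinarith [mul_nonneg (show (0:ℝ) ≤ Real.sqrt 2 - 1 by linarith) hεm0.le]
      calc |∑ y, (P x y - Pbar x y) * (V y - ∑ i, w i * φ i y)|
          ≤ (∑ y, |P x y - Pbar x y|) * E := by linarith [t1, t2, t3.le, t3.ge]
        _ ≤ (3*Real.sqrt 2*εm) * E := mul_le_mul_of_nonneg_right t4 hE0
        _ = 3*Real.sqrt 2*εm*E := by ring
    have hA2 : |∑ i, w i * (((∑ y, P x y * φ i y) - ψ x i) - ((∑ y, Pbar x y * φ i y) - ψ x i))|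
        ≤ 3*Real.sqrt d*εq*W := by
      have t1 : |∑ i, w i * (((∑ y, P x y * φ i y) - ψ x i) - ((∑ y, Pbar x y * φ i y) - ψ x i))|
          ≤ ∑ i, |w i| * |((∑ y, P x y * φ i y) - ψ x i) - ((∑ y, Pbar x y * φ i y) - ψ x i)| := by
        refine (Finset.abs_sum_le_sum_abs _ _).trans (le_of_eq ?_)
        exact Finset.sum_congr rfl fun i _ => abs_mul _ _
      have t2 : ∑ i, |w i| * |((∑ y, P x y * φ i y) - ψ x i) - ((∑ y, Pbar x y * φ i y) - ψ x i)|
          ≤ ∑ i, W * |((∑ y, P x y * φ i y) - ψ x i) - ((∑ y, Pbar x y * φ i y) - ψ x i)| :=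
        Finset.sum_le_sum fun i _ =>
          mul_le_mul_of_nonneg_right (abs_le_supNorm w i) (abs_nonneg _)
      have t3 : ∑ i, W * |((∑ y, P x y * φ i y) - ψ x i) - ((∑ y, Pbar x y * φ i y) - ψ x i)|
          = W * ∑ i, |((∑ y, P x y * φ i y) - ψ x i) - ((∑ y, Pbar x y * φ i y) - ψ x i)| :=
        (Finset.mul_sum _ _ _).symm
      have t4 : ∑ i, |((∑ y, P x y * φ i y) - ψ x i) - ((∑ y, Pbar x y * φ i y) - ψ x i)|
          ≤ Real.sqrt d * Real.sqrt (∑ i, (((∑ y, P x y * φ i y) - ψ x i) - ((∑ y, Pbar x y * φ i y) - ψ x i))^2) :=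
        sum_abs_le_sqrt_card _
      have t5 : Real.sqrt (∑ i, (((∑ y, P x y * φ i y) - ψ x i) - ((∑ y, Pbar x y * φ i y) - ψ x i))^2)
          ≤ 3 * εq := by
        have u1 := sqrt_sum_sq_sub (fun i => (∑ y, P x y * φ i y) - ψ x i)
          (fun i => (∑ y, Pbar x y * φ i y) - ψ x i)
        have u2 : Real.sqrt (∑ i, ((∑ y, P x y * φ i y) - ψ x i) ^ 2) = εQ x := (hεQ x).symm
        have u3 : Real.sqrt (∑ i, ((∑ y, Pbar x y * φ i y) - ψ x i) ^ 2)
            ≤ Real.sqrt (2*εq^2) := Real.sqrt_le_sqrt (hccsum x)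
        have u4 : Real.sqrt (2*εq^2) = Real.sqrt 2 * εq := by
          rw [Real.sqrt_mul (by norm_num), Real.sqrt_sq hεq0.le]
        have u5 := hQx x
        rw [u4] at u3
        rw [u2] at u1
        calc Real.sqrt (∑ i, (((∑ y, P x y * φ i y) - ψ x i) - ((∑ y, Pbar x y * φ i y) - ψ x i))^2)
            ≤ εQ x + Real.sqrt (∑ i, ((∑ y, Pbar x y * φ i y) - ψ x i) ^ 2) := u1
          _ ≤ εq + Real.sqrt 2 * εq := by linarith
          _ ≤ 3 * εq := by
              have : Real.sqrt 2 * εq ≤ 2 * εq := mul_le_mul_of_nonneg_right hs2 hεq0.le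
              linarith
      calc |∑ i, w i * (((∑ y, P x y * φ i y) - ψ x i) - ((∑ y, Pbar x y * φ i y) - ψ x i))|
          ≤ W * ∑ i, |((∑ y, P x y * φ i y) - ψ x i) - ((∑ y, Pbar x y * φ i y) - ψ x i)| := by
            linarith [t1, t2, t3.le]
        _ ≤ W * (Real.sqrt d * (3 * εq)) := by
            apply mul_le_mul_of_nonneg_left _ hW0
            calc ∑ i, |((∑ y, P x y * φ i y) - ψ x i) - ((∑ y, Pbar x y * φ i y) - ψ x i)|
                ≤ Real.sqrt d * Real.sqrt (∑ i, (((∑ y, P x y * φ i y) - ψ x i) - ((∑ y, Pbar x y * φ i y) - ψ x i))^2) := t4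
              _ ≤ Real.sqrt d * (3 * εq) :=
                  mul_le_mul_of_nonneg_left t5 (Real.sqrt_nonneg _)
        _ = 3*Real.sqrt d*εq*W := by ring
    calc |(∑ y, (P x y - Pbar x y) * (V y - ∑ i, w i * φ i y))
          + ∑ i, w i * (((∑ y, P x y * φ i y) - ψ x i) - ((∑ y, Pbar x y * φ i y) - ψ x i))|
        ≤ |∑ y, (P x y - Pbar x y) * (V y - ∑ i, w i * φ i y)|
          + |∑ i, w i * (((∑ y, P x y * φ i y) - ψ x i) - ((∑ y, Pbar x y * φ i y) - ψ x i))| :=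
          abs_add_le _ _
      _ ≤ 3*Real.sqrt 2*εm*E + 3*Real.sqrt d*εq*W := add_le_add hA1 hA2
  -- recursion for the value difference
  have hVx := stoch_fixed_point P γ hP0 hP1 hγ0 hγ1 r V hV
  have hVbarx := stoch_fixed_point Pbar γ hPbar0 hPbar1 hγ0 hγ1 r Vbar hVbar
  have hD : ∀ x, V x - Vbar x = γ * (∑ y, Pbar x y * (V y - Vbar y))
      + γ * (∑ y, (P x y - Pbar x y) * V y) := by
    intro x
    have h1 := hVx x
    have h2 := hVbarx x
    have h3 : ∑ y, P x y * V y
        = (∑ y, Pbar x y * (V y - Vbar y))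
          + ((∑ y, (P x y - Pbar x y) * V y) + ∑ y, Pbar x y * Vbar y) := by
      rw [← Finset.sum_add_distrib, ← Finset.sum_add_distrib]
      exact Finset.sum_congr rfl fun y _ => by ring
    have h4 : V x - Vbar x = γ * ∑ y, P x y * V y - γ * ∑ y, Pbar x y * Vbar y := by
      linarith
    rw [h4, h3]; ring
  set M := supNorm (fun x => V x - Vbar x) with hMdef
  obtain ⟨x₀, hx₀⟩ := exists_supNorm (fun x => V x - Vbar x)
  have hx₀' : M = |V x₀ - Vbar x₀| := hx₀
  set K := 3*Real.sqrt 2*εm*E + 3*Real.sqrt d*εq*W with hKdef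
  have hMbound : M ≤ γ * M + γ * K := by
    have hDx := hD x₀
    have b1 : |∑ y, Pbar x₀ y * (V y - Vbar y)| ≤ M := by
      have c1 : |∑ y, Pbar x₀ y * (V y - Vbar y)| ≤ ∑ y, |Pbar x₀ y * (V y - Vbar y)| :=
        Finset.abs_sum_le_sum_abs _ _
      have c2 : ∑ y, |Pbar x₀ y * (V y - Vbar y)| = ∑ y, Pbar x₀ y * |V y - Vbar y| :=
        Finset.sum_congr rfl fun y _ => by
          rw [abs_mul, abs_of_nonneg (hPbar0 x₀ y)]
      have hDy : ∀ y, |V y - Vbar y| ≤ M := fun y =>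
        abs_le_supNorm (fun x => V x - Vbar x) y
      have c3 : ∑ y, Pbar x₀ y * |V y - Vbar y| ≤ ∑ y, Pbar x₀ y * M :=
        Finset.sum_le_sum fun y _ => mul_le_mul_of_nonneg_left (hDy y) (hPbar0 x₀ y)
      have c4 : ∑ y, Pbar x₀ y * M = M := by
        rw [← Finset.sum_mul, hPbar1 x₀, one_mul]
      linarith [c2.le]
    have b2 := hu x₀
    calc M = |V x₀ - Vbar x₀| := hx₀'
      _ = |γ * (∑ y, Pbar x₀ y * (V y - Vbar y)) + γ * (∑ y, (P x₀ y - Pbar x₀ y) * V y)| := by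
          rw [hDx]
      _ ≤ γ * |∑ y, Pbar x₀ y * (V y - Vbar y)| + γ * |∑ y, (P x₀ y - Pbar x₀ y) * V y| := by
          refine (abs_add_le _ _).trans ?_
          rw [abs_mul, abs_mul, abs_of_nonneg hγ0]
      _ ≤ γ * M + γ * K :=
          add_le_add (mul_le_mul_of_nonneg_left b1 hγ0) (mul_le_mul_of_nonneg_left b2 hγ0)
  have h1γ : (0:ℝ) < 1 - γ := by linarith
  have hMK : M ≤ γ * K / (1 - γ) := by
    rw [le_div_iff₀ h1γ]
    nlinarith
  have hfinal : 3 * c₁ * εm * E + c₂ * εq * W = γ * K / (1 - γ) := by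
    rw [hc₁, hc₂, hKdef]
    field_simp
  calc M ≤ γ * K / (1 - γ) := hMK
    _ = 3 * c₁ * εm * E + c₂ * εq * W := hfinal.symm
end
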